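/- Let n ≥ 4 and let G be a triangle-free connected graph with χ(G) ≥ 3, and G* = (G ⊠ K_{n-1}) ∨ K_{(n-3)(n-1)}. If φ is a K_n-WORM coloring of G* that uses exactly n-3 colors on the universal set V* and makes every fiber V_i monochromatic, then assigning to each vertex v_i of G the color φ(V_i) gives a proper vertex coloring of G, and the colors φ(V_i) are disjoint from those used on V*; consequently φ uses exactly χ'(proper coloring) + n - 3 colors in total, where the number of colors on the fibers can be any value between χ(G) and |V(G)|. -/

import Mathlib

open SimpleGraph

/-- A vertex coloring `c` is a `K_n`-WORM coloring of `G` if no set of `n`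
pairwise adjacent vertices is monochromatic and none is rainbow. -/
def IsKnWORM {β : Type*} (G : SimpleGraph β) (n : ℕ) (c : β → ℕ) : Prop :=
  ∀ s : Finset β, G.IsNClique n s →
    (∃ u ∈ s, ∃ v ∈ s, c u ≠ c v) ∧ (∃ u ∈ s, ∃ v ∈ s, u ≠ v ∧ c u = c v)

/-- The strong product `G ⊠ H`. -/
def strongProd {α β : Type*} (G : SimpleGraph α) (H : SimpleGraph β) :
    SimpleGraph (α × β) where
  Adj x y := x ≠ y ∧ (x.1 = y.1 ∨ G.Adj x.1 y.1) ∧ (x.2 = y.2 ∨ H.Adj x.2 y.2)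
  symm := ⟨by
    rintro x y ⟨h1, h2, h3⟩
    exact ⟨h1.symm, h2.imp Eq.symm (fun h => G.symm.symm _ _ h), h3.imp Eq.symm (fun h => H.symm.symm _ _ h)⟩⟩
  loopless := ⟨fun x h => h.1 rfl⟩

/-- The join `G ∨ H`: disjoint union together with all edges between the parts. -/
def graphJoin {α β : Type*} (G : SimpleGraph α) (H : SimpleGraph β) :
    SimpleGraph (α ⊕ β) where
  Adj x y :=
    match x, y with
    | .inl a, .inl b => G.Adj a b
    | .inr a, .inr b => H.Adj a b
    | _, _ => True
  symm := ⟨by rintro (a | a) (b | b) h <;> simp_all [SimpleGraph.adj_comm]⟩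
  loopless := ⟨by rintro (a | a) h <;> simp_all⟩

/-- The graph `G* = (G ⊠ K_{n-1}) ∨ K_{(n-3)(n-1)}`. -/
def Gstar {V : Type*} (G : SimpleGraph V) (n : ℕ) :
    SimpleGraph ((V × Fin (n - 1)) ⊕ Fin ((n - 3) * (n - 1))) :=
  graphJoin (strongProd G (⊤ : SimpleGraph (Fin (n - 1)))) (⊤ : SimpleGraph (Fin ((n - 3) * (n - 1))))

lemma gstar_ll {V : Type*} (G : SimpleGraph V) (n : ℕ) (p q : V × Fin (n-1)) :
    (Gstar G n).Adj (Sum.inl p) (Sum.inl q) ↔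
      p ≠ q ∧ (p.1 = q.1 ∨ G.Adj p.1 q.1) ∧ (p.2 = q.2 ∨ p.2 ≠ q.2) := by
  simp only [Gstar, graphJoin, strongProd, top_adj]

lemma gstar_lr {V : Type*} (G : SimpleGraph V) (n : ℕ) (p : V × Fin (n-1))
    (w : Fin ((n-3)*(n-1))) : (Gstar G n).Adj (Sum.inl p) (Sum.inr w) := trivial

lemma gstar_rl {V : Type*} (G : SimpleGraph V) (n : ℕ) (p : V × Fin (n-1))
    (w : Fin ((n-3)*(n-1))) : (Gstar G n).Adj (Sum.inr w) (Sum.inl p) := trivial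

lemma gstar_rr {V : Type*} (G : SimpleGraph V) (n : ℕ) (w x : Fin ((n-3)*(n-1))) :
    (Gstar G n).Adj (Sum.inr w) (Sum.inr x) ↔ w ≠ x := Iff.rfl

lemma clique_card_le {α} (G : SimpleGraph α) (h : G.CliqueFree 3) (s : Finset α)
    (hs : G.IsClique ↑s) : s.card ≤ 2 := by
  by_contra hc
  push_neg at hc
  obtain ⟨t, hts, ht3⟩ := Finset.exists_subset_card_eq hc
  exact h t ⟨hs.subset (by exact_mod_cast hts), ht3⟩

/-- Existence of a proper coloring with exactly `t` colors. -/
lemma exists_proper_exact {V : Type} [Fintype V] [Nonempty V] (G : SimpleGraph V) (t : ℕ)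
    (hcol : G.Colorable t) (ht : t ≤ Fintype.card V) :
    ∃ c : V → ℕ, (∀ u v, G.Adj u v → c u ≠ c v) ∧ Set.range c = ↑(Finset.image c Finset.univ) ∧
      (Finset.image c Finset.univ).card = t := by
  classical
  obtain ⟨C⟩ := hcol
  set U : Finset (Fin t) := Finset.image C Finset.univ with hU
  have hUcard : U.card ≤ t := le_trans (Finset.card_le_card (Finset.subset_univ U)) (by simp)
  have hrep : ∀ x ∈ U, ∃ v : V, C v = x := by
    intro x hx
    simp only [hU, Finset.mem_image] at hx
    obtain ⟨v, _, hv⟩ := hx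
    exact ⟨v, hv⟩
  choose r hr using hrep
  set R : Finset V := U.attach.image (fun x => r x.1 x.2) with hR
  have hRcard : R.card ≤ U.card := le_trans (Finset.card_image_le) (by simp)
  have hboard : t - U.card ≤ (Finset.univ \ R).card := by
    have : (Finset.univ \ R).card = Fintype.card V - R.card := by
      rw [Finset.card_sdiff_of_subset (Finset.subset_univ R)]; simp
    omega
  obtain ⟨S, hSsub, hScard⟩ := Finset.exists_subset_card_eq hboard
  set e := S.equivFin with he
  set c : V → ℕ := fun v => if hv : v ∈ S then t + (e ⟨v, hv⟩ : ℕ) else (C v : ℕ) with hc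
  have hcS : ∀ v (hv : v ∈ S), c v = t + (e ⟨v, hv⟩ : ℕ) := by intro v hv; simp [hc, hv]
  have hcNS : ∀ v, v ∉ S → c v = (C v : ℕ) := by intro v hv; simp [hc, hv]
  have hlt : ∀ v, v ∉ S → c v < t := by
    intro v hv; rw [hcNS v hv]; exact (C v).2
  refine ⟨c, ?_, by simp [Set.ext_iff, Finset.mem_coe, Finset.mem_image], ?_⟩
  · intro u v huv
    by_cases hu : u ∈ S <;> by_cases hv : v ∈ S
    · rw [hcS u hu, hcS v hv]
      intro hEq
      have : e ⟨u, hu⟩ = e ⟨v, hv⟩ := by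
        apply Fin.ext; omega
      have := e.injective this
      exact G.ne_of_adj huv (by simpa using congrArg Subtype.val this)
    · have := hlt v hv; rw [hcS u hu]; omega
    · have := hlt u hu; rw [hcNS u hu, hcS v hv]; omega
    · rw [hcNS u hu, hcNS v hv]
      exact fun hEq => C.valid huv (Fin.ext hEq)
  · have hsplit : Finset.image c Finset.univ = Finset.image c S ∪ Finset.image (fun v => (C v : ℕ)) Finset.univ := by
      apply Finset.ext
      intro x
      simp only [Finset.mem_union, Finset.mem_image, Finset.mem_univ, true_and]
      constructor
      · rintro ⟨v, hv⟩
        by_cases hvS : v ∈ S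
        · exact Or.inl ⟨v, hvS, hv⟩
        · exact Or.inr ⟨v, by rwa [hcNS v hvS] at hv⟩
      · rintro (⟨v, _, hv⟩ | ⟨v, hv⟩)
        · exact ⟨v, hv⟩
        · have hCv : C v ∈ U := by simp [hU]
          have hrv : r (C v) hCv ∈ R := by
            simp only [hR, Finset.mem_image]
            exact ⟨⟨C v, hCv⟩, Finset.mem_attach _ _, rfl⟩
          have hrnS : r (C v) hCv ∉ S := fun hmem => (Finset.mem_sdiff.mp (hSsub hmem)).2 hrv
          exact ⟨r (C v) hCv, by rw [hcNS _ hrnS, hr (C v) hCv, hv]⟩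
    have hdisj : Disjoint (Finset.image c S) (Finset.image (fun v => (C v : ℕ)) Finset.univ) := by
      rw [Finset.disjoint_left]
      intro x hx hy
      simp only [Finset.mem_image] at hx hy
      obtain ⟨v, hvS, hv⟩ := hx
      obtain ⟨w, _, hw⟩ := hy
      rw [hcS v hvS] at hv
      have : x < t := hw ▸ (C w).2
      omega
    have hinj : (Finset.image c S).card = S.card := by
      rw [Finset.card_image_of_injOn]
      intro u hu v hv hEq
      rw [hcS u hu, hcS v hv] at hEq
      have : e ⟨u, hu⟩ = e ⟨v, hv⟩ := by apply Fin.ext; omega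
      simpa using congrArg Subtype.val (e.injective this)
    have himg2 : (Finset.image (fun v => (C v : ℕ)) Finset.univ).card = U.card := by
      have himg : Finset.image (fun v => (C v : ℕ)) Finset.univ
          = Finset.image Fin.val (Finset.image (⇑C) Finset.univ) := by
        rw [Finset.image_image]; rfl
      rw [hU, himg]
      exact Finset.card_image_of_injective _ Fin.val_injective
    rw [hsplit, Finset.card_union_of_disjoint hdisj, hinj, himg2, hScard]
    omega

/-- Let `n ≥ 4`, `G` triangle-free connected with `χ(G) ≥ 3`, and
`G* = (G ⊠ K_{n-1}) ∨ K_{(n-3)(n-1)}`.  If `φ` is a `K_n`-WORM coloring of `G*`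
using exactly `n-3` colors on the universal set `V*` and making every fiber
`V_i` monochromatic, then `v_i ↦ φ(V_i)` is a proper coloring of `G`, the fiber
colors avoid the colors of `V*`, and the total number of colors is the number
of fiber colors plus `n-3`; moreover the number of fiber colors can be any
value between `χ(G)` and `|V(G)|`. -/
theorem stmt18 {V : Type} [Fintype V] (n : ℕ) (hn : 4 ≤ n)
    (G : SimpleGraph V) (htf : G.CliqueFree 3) (hconn : G.Connected)
    (hχ : 3 ≤ G.chromaticNumber) :
    (∀ φ : (V × Fin (n - 1)) ⊕ Fin ((n - 3) * (n - 1)) → ℕ,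
      IsKnWORM (Gstar G n) n φ →
      (Set.range (fun w : Fin ((n - 3) * (n - 1)) => φ (Sum.inr w))).ncard = n - 3 →
      (∀ (i : V) (a b : Fin (n - 1)), φ (Sum.inl (i, a)) = φ (Sum.inl (i, b))) →
      (∀ u v : V, G.Adj u v →
          φ (Sum.inl (u, ⟨0, by omega⟩)) ≠ φ (Sum.inl (v, ⟨0, by omega⟩))) ∧
      (∀ i : V, φ (Sum.inl (i, ⟨0, by omega⟩)) ∉
          Set.range (fun w : Fin ((n - 3) * (n - 1)) => φ (Sum.inr w))) ∧
      (Set.range φ).ncard =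
        (Set.range (fun i : V => φ (Sum.inl (i, ⟨0, by omega⟩)))).ncard + (n - 3)) ∧
    (∀ t : ℕ, G.chromaticNumber ≤ (t : ℕ∞) → t ≤ Fintype.card V →
      ∃ φ : (V × Fin (n - 1)) ⊕ Fin ((n - 3) * (n - 1)) → ℕ,
        IsKnWORM (Gstar G n) n φ ∧
        (Set.range (fun w : Fin ((n - 3) * (n - 1)) => φ (Sum.inr w))).ncard = n - 3 ∧
        (∀ (i : V) (a b : Fin (n - 1)), φ (Sum.inl (i, a)) = φ (Sum.inl (i, b))) ∧
        (Set.range (fun i : V => φ (Sum.inl (i, ⟨0, by omega⟩)))).ncard = t) := by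
  classical
  haveI : Nonempty V := hconn.nonempty
  have hn1 : 0 < n - 1 := by omega
  set z : Fin (n - 1) := ⟨0, by omega⟩ with hz
  -- the fiber of `i` as a finset
  set Fi : V → Finset ((V × Fin (n - 1)) ⊕ Fin ((n - 3) * (n - 1))) :=
    fun i => Finset.image (fun a : Fin (n-1) => Sum.inl (i, a)) Finset.univ with hFi
  have hFiMem : ∀ i x, x ∈ Fi i ↔ ∃ a : Fin (n-1), x = Sum.inl (i, a) := by
    intro i x
    simp only [hFi, Finset.mem_image, Finset.mem_univ, true_and]
    exact ⟨fun ⟨a, ha⟩ => ⟨a, ha.symm⟩, fun ⟨a, ha⟩ => ⟨a, ha.symm⟩⟩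
  have hFicard : ∀ i, (Fi i).card = n - 1 := by
    intro i
    have hinj : Function.Injective (fun a : Fin (n-1) =>
        (Sum.inl (i, a) : (V × Fin (n - 1)) ⊕ Fin ((n - 3) * (n - 1)))) := by
      intro a b hab
      simpa using hab
    rw [hFi, Finset.card_image_of_injective _ hinj, Finset.card_univ, Fintype.card_fin]
  constructor
  · -- Part 1
    intro φ hworm hVstar hmono
    -- (a) proper coloring
    have ha : ∀ u v : V, G.Adj u v →
        φ (Sum.inl (u, z)) ≠ φ (Sum.inl (v, z)) := by
      intro u v huv hEq
      set s := Fi u ∪ {Sum.inl (v, z)} with hs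
      have hvnot : (Sum.inl (v, z) : (V × Fin (n-1)) ⊕ _) ∉ Fi u := by
        rw [hFiMem]
        rintro ⟨a, ha⟩
        have hvu : (v, z) = (u, a) := by simpa using ha
        exact G.ne_of_adj huv (congrArg Prod.fst hvu).symm
      have hcard : s.card = n := by
        rw [hs, Finset.union_comm, ← Finset.insert_eq,
          Finset.card_insert_of_notMem hvnot, hFicard]
        omega
      have hclique : (Gstar G n).IsClique ↑s := by
        intro x hx y hy hxy
        simp only [hs, Finset.coe_union, Set.mem_union, Finset.mem_coe,
          Finset.coe_singleton, Set.mem_singleton_iff] at hx hy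
        rcases hx with hx | rfl <;> rcases hy with hy | rfl
        · obtain ⟨a, rfl⟩ := (hFiMem u x).mp hx
          obtain ⟨b, rfl⟩ := (hFiMem u y).mp hy
          rw [gstar_ll]
          exact ⟨by simpa using hxy, Or.inl rfl, Classical.em _⟩
        · obtain ⟨a, rfl⟩ := (hFiMem u x).mp hx
          rw [gstar_ll]
          exact ⟨by simpa using hxy, Or.inr huv, Classical.em _⟩
        · obtain ⟨b, rfl⟩ := (hFiMem u y).mp hy
          rw [gstar_ll]
          exact ⟨by simpa using hxy, Or.inr huv.symm, Classical.em _⟩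
        · exact absurd rfl hxy
      obtain ⟨⟨x, hx, y, hy, hneq⟩, -⟩ := hworm s ⟨hclique, hcard⟩
      have hall : ∀ x ∈ s, φ x = φ (Sum.inl (u, z)) := by
        intro x hx
        rcases Finset.mem_union.mp hx with hx | hx
        · obtain ⟨a, rfl⟩ := (hFiMem u x).mp hx
          exact hmono u a z
        · rw [Finset.mem_singleton.mp hx]
          exact hEq.symm
      exact hneq (by rw [hall x hx, hall y hy])
    -- (b) fiber colors avoid V* colors
    have hb : ∀ i : V, φ (Sum.inl (i, z)) ∉
        Set.range (fun w : Fin ((n - 3) * (n - 1)) => φ (Sum.inr w)) := by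
      rintro i ⟨w, hw⟩
      set s := Fi i ∪ {Sum.inr w} with hs
      have hwnot : (Sum.inr w : (V × Fin (n-1)) ⊕ _) ∉ Fi i := by
        rw [hFiMem]; rintro ⟨a, ha⟩; cases ha
      have hcard : s.card = n := by
        rw [hs, Finset.union_comm, ← Finset.insert_eq,
          Finset.card_insert_of_notMem hwnot, hFicard]
        omega
      have hclique : (Gstar G n).IsClique ↑s := by
        intro x hx y hy hxy
        simp only [hs, Finset.coe_union, Set.mem_union, Finset.mem_coe,
          Finset.coe_singleton, Set.mem_singleton_iff] at hx hy
        rcases hx with hx | rfl <;> rcases hy with hy | rfl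
        · obtain ⟨a, rfl⟩ := (hFiMem i x).mp hx
          obtain ⟨b, rfl⟩ := (hFiMem i y).mp hy
          rw [gstar_ll]
          exact ⟨by simpa using hxy, Or.inl rfl, Classical.em _⟩
        · obtain ⟨a, rfl⟩ := (hFiMem i x).mp hx
          exact gstar_lr G n _ w
        · obtain ⟨b, rfl⟩ := (hFiMem i y).mp hy
          exact gstar_rl G n _ w
        · exact absurd rfl hxy
      obtain ⟨⟨x, hx, y, hy, hneq⟩, -⟩ := hworm s ⟨hclique, hcard⟩
      have hall : ∀ x ∈ s, φ x = φ (Sum.inl (i, z)) := by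
        intro x hx
        rcases Finset.mem_union.mp hx with hx | hx
        · obtain ⟨a, rfl⟩ := (hFiMem i x).mp hx
          exact hmono i a z
        · rw [Finset.mem_singleton.mp hx]
          exact hw
      exact hneq (by rw [hall x hx, hall y hy])
    refine ⟨ha, hb, ?_⟩
    -- (c) counting
    have hrange : Set.range φ =
        Set.range (fun i : V => φ (Sum.inl (i, z))) ∪
        Set.range (fun w : Fin ((n - 3) * (n - 1)) => φ (Sum.inr w)) := by
      ext x
      constructor
      · rintro ⟨(⟨i, a⟩ | w), rfl⟩
        · exact Or.inl ⟨i, hmono i z a⟩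
        · exact Or.inr ⟨w, rfl⟩
      · rintro (⟨i, rfl⟩ | ⟨w, rfl⟩)
        · exact ⟨_, rfl⟩
        · exact ⟨_, rfl⟩
    rw [hrange, Set.ncard_union_eq (Set.disjoint_left.mpr (by rintro x ⟨i, rfl⟩; exact hb i))
      (Set.finite_range _) (Set.finite_range _), hVstar]
  · -- Part 2: construction
    intro t ht1 ht2
    obtain ⟨c, hprop, hrangec, hcardc⟩ :=
      exists_proper_exact G t (chromaticNumber_le_iff_colorable.mp ht1) ht2
    set φ : (V × Fin (n - 1)) ⊕ Fin ((n - 3) * (n - 1)) → ℕ :=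
      Sum.elim (fun p => n - 3 + c p.1) (fun w => (w : ℕ) / (n - 1)) with hφ
    have hdivlt : ∀ w : Fin ((n - 3) * (n - 1)), (w : ℕ) / (n - 1) < n - 3 := by
      intro w
      rw [Nat.div_lt_iff_lt_mul hn1]
      exact w.2
    refine ⟨φ, ?_, ?_, fun i a b => rfl, ?_⟩
    · -- IsKnWORM
      intro s hs
      have hclq := hs.isClique
      have hcard := hs.card_eq
      have hfst : ∀ p q : V × Fin (n-1), Sum.inl p ∈ s → Sum.inl q ∈ s →
          p.1 = q.1 ∨ G.Adj p.1 q.1 := by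
        intro p q hp hq
        by_cases hpq : p = q
        · exact Or.inl (by rw [hpq])
        · have := hclq hp hq (by simpa using hpq)
          exact ((gstar_ll G n p q).mp this).2.1
      constructor
      · -- not monochromatic
        by_contra hmon
        push_neg at hmon
        by_cases hL : ∃ p : V × Fin (n-1), Sum.inl p ∈ s
        · obtain ⟨p, hp⟩ := hL
          by_cases hR : ∃ w : Fin ((n-3)*(n-1)), Sum.inr w ∈ s
          · obtain ⟨w, hw⟩ := hR
            have := hmon _ hp _ hw
            have h2 := hdivlt w
            simp only [hφ, Sum.elim_inl, Sum.elim_inr] at this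
            omega
          · -- all inl
            by_cases hsame : ∀ p q : V × Fin (n-1), Sum.inl p ∈ s → Sum.inl q ∈ s →
                p.1 = q.1
            · -- all in one fiber : too few vertices
              have hmaps : ∀ x ∈ s, (Sum.elim (fun p : V × Fin (n-1) => (p.2 : ℕ))
                  (fun _ => 0)) x ∈ Finset.range (n-1) := by
                rintro (q | w) hx
                · simpa using q.2.2
                · exact absurd ⟨w, hx⟩ hR
              obtain ⟨x, hx, y, hy, hxy, hexy⟩ :=
                Finset.exists_ne_map_eq_of_card_lt_of_maps_to
                  (by rw [hcard, Finset.card_range]; omega) hmaps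
              rcases x with q1 | w1
              rcases y with q2 | w2
              · apply hxy
                have h1 := hsame q1 q2 hx hy
                simp only [Sum.elim_inl] at hexy
                have : q1 = q2 := Prod.ext h1 (Fin.ext hexy)
                rw [this]
              · exact absurd ⟨w2, hy⟩ hR
              · exact absurd ⟨w1, hx⟩ hR
            · push_neg at hsame
              obtain ⟨p1, q1, hp1, hq1, hne1⟩ := hsame
              have hadj := (hfst p1 q1 hp1 hq1).resolve_left hne1
              have := hmon _ hp1 _ hq1
              simp only [hφ, Sum.elim_inl] at this
              exact hprop _ _ hadj (by omega)
        · by_cases hR : ∃ w : Fin ((n-3)*(n-1)), Sum.inr w ∈ s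
          · -- all inr : monochromatic class too small
            have hmaps : ∀ x ∈ s, (Sum.elim (fun _ : V × Fin (n-1) => 0)
                (fun w : Fin ((n-3)*(n-1)) => (w : ℕ) % (n-1))) x ∈ Finset.range (n-1) := by
              rintro (q | w) hx
              · exact absurd ⟨q, hx⟩ hL
              · simpa using Nat.mod_lt _ hn1
            obtain ⟨x, hx, y, hy, hxy, hexy⟩ :=
              Finset.exists_ne_map_eq_of_card_lt_of_maps_to
                (by rw [hcard, Finset.card_range]; omega) hmaps
            rcases x with q1 | w1
            · exact absurd ⟨q1, hx⟩ hL
            rcases y with q2 | w2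
            · exact absurd ⟨q2, hy⟩ hL
            apply hxy
            have hdiv := hmon _ hx _ hy
            simp only [hφ, Sum.elim_inr] at hdiv
            simp only [Sum.elim_inr] at hexy
            have : (w1 : ℕ) = (w2 : ℕ) := by
              have e1 := Nat.div_add_mod (w1 : ℕ) (n-1)
              have e2 := Nat.div_add_mod (w2 : ℕ) (n-1)
              rw [hdiv] at e1
              omega
            rw [Fin.ext this]
          · -- s empty, contradiction with card
            obtain ⟨x, hx⟩ := Finset.card_pos.mp (by omega : 0 < s.card)
            rcases x with q | w
            · exact absurd ⟨q, hx⟩ hL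
            · exact absurd ⟨w, hx⟩ hR
      · -- not rainbow
        set π : (V × Fin (n - 1)) ⊕ Fin ((n - 3) * (n - 1)) → V :=
          Sum.elim Prod.fst (fun _ => Classical.arbitrary V) with hπ
        set F : Finset V := (s.filter (fun x => x.isLeft)).image π with hF
        have hFclique : G.IsClique ↑F := by
          intro i hi j hj hij
          simp only [hF, Finset.coe_image, Set.mem_image, Finset.mem_coe,
            Finset.mem_filter] at hi hj
          obtain ⟨x, ⟨hxs, hxl⟩, rfl⟩ := hi
          obtain ⟨y, ⟨hys, hyl⟩, rfl⟩ := hj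
          obtain ⟨p, rfl⟩ := Sum.isLeft_iff.mp hxl
          obtain ⟨q, rfl⟩ := Sum.isLeft_iff.mp hyl
          simp only [hπ, Sum.elim_inl] at hij ⊢
          exact (hfst p q hxs hys).resolve_left hij
        have hF2 : F.card ≤ 2 := clique_card_le G htf F hFclique
        set T : Finset ℕ := Finset.range (n-3) ∪ F.image (fun i => n - 3 + c i) with hT
        have hTcard : T.card < s.card := by
          have h1 : T.card ≤ (n-3) + F.card := by
            rw [hT]
            refine le_trans (Finset.card_union_le _ _) ?_
            simp only [Finset.card_range]
            exact Nat.add_le_add_left Finset.card_image_le _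
          rw [hcard]
          omega
        have hmaps : ∀ x ∈ s, φ x ∈ T := by
          rintro (q | w) hx
          · simp only [hφ, Sum.elim_inl, hT, Finset.mem_union]
            right
            apply Finset.mem_image_of_mem
            simp only [hF, Finset.mem_image]
            exact ⟨Sum.inl q, Finset.mem_filter.mpr ⟨hx, rfl⟩, rfl⟩
          · simp only [hφ, Sum.elim_inr, hT, Finset.mem_union]
            exact Or.inl (Finset.mem_range.mpr (hdivlt w))
        exact Finset.exists_ne_map_eq_of_card_lt_of_maps_to hTcard hmaps
    · -- ncard of V* colors
      have : Set.range (fun w : Fin ((n - 3) * (n - 1)) => φ (Sum.inr w)) =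
          ↑(Finset.range (n - 3)) := by
        ext x
        simp only [hφ, Sum.elim_inr, Set.mem_range, Finset.coe_range, Set.mem_Iio]
        constructor
        · rintro ⟨w, rfl⟩; exact hdivlt w
        · intro hx
          refine ⟨⟨x * (n-1), ?_⟩, ?_⟩
          · exact (Nat.mul_lt_mul_right hn1).mpr hx
          · exact Nat.mul_div_cancel x hn1
      rw [this, Set.ncard_coe_finset, Finset.card_range]
    · -- ncard of fiber colors
      have : Set.range (fun i : V => φ (Sum.inl (i, ⟨0, by omega⟩))) =
          (fun x => n - 3 + x) '' Set.range c := by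
        ext x
        simp only [hφ, Sum.elim_inl, Set.mem_range, Set.mem_image]
        constructor
        · rintro ⟨i, rfl⟩; exact ⟨c i, ⟨i, rfl⟩, rfl⟩
        · rintro ⟨y, ⟨i, rfl⟩, rfl⟩; exact ⟨i, rfl⟩
      rw [this, Set.ncard_image_of_injective _ (fun a b hab => by omega),
        hrangec, Set.ncard_coe_finset, hcardc]
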